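/- Let Δ be a flag normal (d-1)-pseudomanifold with d ≥ 2. Then Δ has at least 2d vertices, and equality holds if and only if Δ is the boundary complex of the d-dimensional cross-polytope (the d-fold join of the 0-sphere S^0). -/

import Mathlib

open Finset

/-- An abstract simplicial complex on vertex type `V`, given by a finite,
downward-closed family of finite faces containing the empty face. -/
structure SC (V : Type*) [DecidableEq V] where
  faces : Finset (Finset V)
  empty_mem : ∅ ∈ faces
  down_closed : ∀ ⦃σ τ : Finset V⦄, σ ∈ faces → τ ⊆ σ → τ ∈ faces

namespace SC

variable {V : Type*} [DecidableEq V]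

/-- The vertex set of a complex. -/
def vertexSet (Δ : SC V) : Finset V := Δ.faces.sup id

/-- `fNum Δ i` is the number of `i`-dimensional faces (faces of cardinality `i+1`). -/
def fNum (Δ : SC V) (i : ℕ) : ℕ := (Δ.faces.filter fun σ => σ.card = i + 1).card

/-- A complex is flag if it is the clique complex of its graph, i.e. every set of
vertices which is pairwise joined by edges is a face (equivalently, all minimal
non-faces have cardinality two). -/
def IsFlag (Δ : SC V) : Prop :=
  ∀ σ : Finset V, (∀ u ∈ σ, ∀ v ∈ σ, ({u, v} : Finset V) ∈ Δ.faces) → σ ∈ Δ.faces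

/-- The restriction `Δ[W]` of `Δ` to a set `W` of vertices. -/
def restrict (Δ : SC V) (W : Finset V) : SC V where
  faces := Δ.faces.filter fun σ => σ ⊆ W
  empty_mem := by simp [Δ.empty_mem]
  down_closed := by
    intro σ τ hσ hτ
    simp only [mem_filter] at hσ ⊢
    exact ⟨Δ.down_closed hσ.1 hτ, hτ.trans hσ.2⟩

/-- The link of a face `σ` in `Δ`. -/
def link (Δ : SC V) (σ : Finset V) : SC V where
  faces := insert ∅ (Δ.faces.filter fun τ => Disjoint τ σ ∧ τ ∪ σ ∈ Δ.faces)
  empty_mem := mem_insert_self _ _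
  down_closed := by
    intro τ ρ hτ hρ
    rcases mem_insert.1 hτ with h | h
    · subst h
      simp [Finset.subset_empty.1 hρ]
    · simp only [mem_filter] at h
      refine mem_insert.2 (Or.inr ?_)
      simp only [mem_filter]
      exact ⟨Δ.down_closed h.1 hρ, h.2.1.mono_left hρ,
        Δ.down_closed h.2.2 (Finset.union_subset_union hρ Finset.Subset.rfl)⟩

/-- A facet is a maximal face. -/
def IsFacet (Δ : SC V) (σ : Finset V) : Prop :=
  σ ∈ Δ.faces ∧ ∀ τ ∈ Δ.faces, σ ⊆ τ → σ = τ

/-- `Δ` is pure of dimension `D`: all faces have dimension at most `D` and all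
facets have dimension exactly `D`. -/
def Pure (Δ : SC V) (D : ℕ) : Prop :=
  (∀ σ ∈ Δ.faces, σ.card ≤ D + 1) ∧ (∃ σ ∈ Δ.faces, σ.card = D + 1) ∧
    ∀ σ : Finset V, Δ.IsFacet σ → σ.card = D + 1

/-- The graph (1-skeleton) of a complex. -/
def graph (Δ : SC V) : SimpleGraph V where
  Adj u v := u ≠ v ∧ ({u, v} : Finset V) ∈ Δ.faces
  symm := by
    constructor
    intro u v h
    exact ⟨h.1.symm, by rw [Finset.pair_comm]; exact h.2⟩
  loopless := by constructor; intro u h; exact h.1 rfl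

/-- A complex is connected if its vertex set is nonempty and any two vertices are
joined by a path in its graph. -/
def Connected (Δ : SC V) : Prop :=
  Δ.vertexSet.Nonempty ∧ ∀ u ∈ Δ.vertexSet, ∀ v ∈ Δ.vertexSet, Δ.graph.Reachable u v

/-- The reduced Euler characteristic `χ̃(Δ) = -1 + f₀ - f₁ + f₂ - ⋯`. -/
def redChar (Δ : SC V) : ℤ := -∑ σ ∈ Δ.faces, (-1 : ℤ) ^ σ.card

/-- `Δ` is an Eulerian complex of dimension `D`: it is pure of dimension `D` and the
reduced Euler characteristic of the link of every face `σ` (including `σ = ∅`)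
equals `(-1) ^ (dim lk σ)`, written multiplicatively to avoid signed dimensions. -/
def IsEulerian (Δ : SC V) (D : ℕ) : Prop :=
  Δ.Pure D ∧ ∀ σ ∈ Δ.faces, (Δ.link σ).redChar * (-1) ^ σ.card = (-1) ^ D

/-- A weak pseudomanifold of dimension `D`: pure and every ridge ((D-1)-face) lies
in exactly two facets. -/
def IsWeakPseudo (Δ : SC V) (D : ℕ) : Prop :=
  Δ.Pure D ∧ ∀ σ ∈ Δ.faces, σ.card = D →
    (Δ.faces.filter fun τ => σ ⊆ τ ∧ τ.card = D + 1).card = 2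

/-- A normal pseudomanifold of dimension `D`: a connected weak pseudomanifold all of
whose links of faces of dimension `≤ D - 2` are connected. -/
def IsNormalPseudo (Δ : SC V) (D : ℕ) : Prop :=
  Δ.IsWeakPseudo D ∧ Δ.Connected ∧
    ∀ σ ∈ Δ.faces, σ.card + 1 ≤ D → (Δ.link σ).Connected

/-- The join of two complexes (on disjoint vertex sets). -/
def join (Δ Γ : SC V) : SC V where
  faces := (Δ.faces ×ˢ Γ.faces).image fun p => p.1 ∪ p.2
  empty_mem := Finset.mem_image.2 ⟨(∅, ∅),
    Finset.mem_product.2 ⟨Δ.empty_mem, Γ.empty_mem⟩, Finset.union_empty ∅⟩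
  down_closed := by
    intro σ τ hσ hτ
    rw [Finset.mem_image] at hσ ⊢
    obtain ⟨⟨a, b⟩, hab, rfl⟩ := hσ
    rw [Finset.mem_product] at hab
    refine ⟨(τ ∩ a, τ ∩ b), Finset.mem_product.2
      ⟨Δ.down_closed hab.1 Finset.inter_subset_right,
       Γ.down_closed hab.2 Finset.inter_subset_right⟩, ?_⟩
    rw [← Finset.inter_union_distrib_left]
    exact Finset.inter_eq_left.2 hτ

/-- The trivial complex, whose only face is the empty face (identity for join). -/
def trivialSC : SC V where
  faces := {∅}
  empty_mem := Finset.mem_singleton_self ∅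
  down_closed := by
    intro σ τ hσ hτ
    simp only [Finset.mem_singleton] at hσ ⊢
    subst hσ
    exact Finset.subset_empty.1 hτ

/-- The join of a finite family of complexes. -/
def bigJoin : {k : ℕ} → (Fin k → SC V) → SC V
  | 0, _ => trivialSC
  | _ + 1, C => (C 0).join (bigJoin fun i => C i.succ)

/-- `Δ` is a cycle (circle) with `n` vertices: a connected, 1-dimensional complex
all of whose vertices have exactly two neighbours. -/
def IsCycle (Δ : SC V) (n : ℕ) : Prop :=
  Δ.vertexSet.card = n ∧ (∀ σ ∈ Δ.faces, σ.card ≤ 2) ∧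
    (∀ v ∈ Δ.vertexSet, (Δ.link {v}).vertexSet.card = 2) ∧ Δ.Connected

/-- `Δ` is the boundary complex of the `d`-dimensional cross-polytope: its vertices
come in `d` antipodal pairs and the faces are exactly the sets containing at most
one vertex of each pair. -/
def IsCrossPolytopeBoundary (Δ : SC V) (d : ℕ) : Prop :=
  ∃ x y : Fin d → V, Function.Injective x ∧ Function.Injective y ∧
    (∀ i j, x i ≠ y j) ∧
    ∀ σ : Finset V, σ ∈ Δ.faces ↔
      ((∀ v ∈ σ, ∃ i, v = x i ∨ v = y i) ∧ ∀ i, ¬(x i ∈ σ ∧ y i ∈ σ))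

/-- `Δ` is a simplicial 2-sphere: a connected weak 2-pseudomanifold whose vertex
links are circles and whose reduced Euler characteristic is 1. -/
def IsSphere2 (Δ : SC V) : Prop :=
  Δ.Connected ∧ Δ.IsWeakPseudo 2 ∧
    (∀ v ∈ Δ.vertexSet, ∃ n, 3 ≤ n ∧ (Δ.link {v}).IsCycle n) ∧ Δ.redChar = 1

/-- `Δ` is a (closed) simplicial 3-manifold: connected, pure of dimension 3, and the
link of every vertex is a simplicial 2-sphere. -/
def Is3Manifold (Δ : SC V) : Prop :=
  Δ.Connected ∧ Δ.Pure 3 ∧ ∀ v ∈ Δ.vertexSet, (Δ.link {v}).IsSphere2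

/-- `Δ` is a disjoint union of cycles, each of length at least 4: it is
1-dimensional, 2-regular and its graph has no triangles. -/
def IsDisjointUnionOfCyclesGe4 (Δ : SC V) : Prop :=
  (∀ σ ∈ Δ.faces, σ.card ≤ 2) ∧
    (∀ v ∈ Δ.vertexSet, (Δ.link {v}).vertexSet.card = 2) ∧
    ∀ u v w : V, ({u, v} : Finset V) ∈ Δ.faces → ({v, w} : Finset V) ∈ Δ.faces →
      ({u, w} : Finset V) ∈ Δ.faces → u = v ∨ v = w ∨ u = w

end SC

namespace SC

variable {V : Type*} [DecidableEq V]

lemma mem_vertexSet_iff' (Δ : SC V) (w : V) :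
    w ∈ Δ.vertexSet ↔ ∃ τ ∈ Δ.faces, w ∈ τ := by
  simp [vertexSet, Finset.mem_sup]

lemma singleton_mem' (Δ : SC V) {w : V} {τ : Finset V} (hτ : τ ∈ Δ.faces) (hw : w ∈ τ) :
    ({w} : Finset V) ∈ Δ.faces :=
  Δ.down_closed hτ (by simpa using hw)

/-- Ridge swap: given a facet `σ` of a flag weak pseudomanifold and `v ∈ σ`, there is a
vertex `u ∉ σ` non-adjacent to `v` such that `σ - v + u` is a face. -/
lemma ridge_swap (Δ : SC V) {d : ℕ} (hd : 1 ≤ d)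
    (hflag : Δ.IsFlag) (hwp : Δ.IsWeakPseudo (d - 1))
    {σ : Finset V} (hσ : σ ∈ Δ.faces) (hcard : σ.card = d) {v : V} (hv : v ∈ σ) :
    ∃ u, u ∉ σ ∧ insert u (σ.erase v) ∈ Δ.faces ∧ ({u, v} : Finset V) ∉ Δ.faces := by
  have hD : d - 1 + 1 = d := Nat.succ_pred_eq_of_pos hd
  set ρ := σ.erase v with hρdef
  have hρf : ρ ∈ Δ.faces := Δ.down_closed hσ (Finset.erase_subset _ _)
  have hρc : ρ.card = d - 1 := by rw [hρdef, Finset.card_erase_of_mem hv, hcard]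
  have h2 := hwp.2 ρ hρf hρc
  obtain ⟨τ, hτmem, hτne⟩ := Finset.exists_mem_ne
    (s := Δ.faces.filter fun τ => ρ ⊆ τ ∧ τ.card = d - 1 + 1) (by omega) σ
  rw [Finset.mem_filter] at hτmem
  obtain ⟨hτf, hρτ, hτc⟩ := hτmem
  have hτc' : τ.card = d := by omega
  have hsd : (τ \ ρ).card = 1 := by
    rw [Finset.card_sdiff_of_subset hρτ]; omega
  obtain ⟨u, hu⟩ := Finset.card_eq_one.mp hsd
  have huρ : u ∉ ρ := by
    have : u ∈ τ \ ρ := hu ▸ Finset.mem_singleton_self u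
    exact (Finset.mem_sdiff.mp this).2
  have hτeq : τ = insert u ρ := by
    have h := Finset.sdiff_union_of_subset hρτ
    rw [hu] at h
    rw [← h, Finset.insert_eq]
  have huv : u ≠ v := by
    intro h
    apply hτne
    rw [hτeq, h, hρdef, Finset.insert_erase hv]
  have huσ : u ∉ σ := by
    intro h
    exact huρ (Finset.mem_erase.mpr ⟨huv, h⟩)
  refine ⟨u, huσ, by rw [← hτeq]; exact hτf, ?_⟩
  intro hedge
  have hπ : insert u σ ∈ Δ.faces := by
    apply hflag
    intro a ha b hb
    rcases Finset.mem_insert.mp ha with rfl | haσ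
    · rcases Finset.mem_insert.mp hb with rfl | hbσ
      · exact Δ.down_closed (Δ.singleton_mem' hτf (hτeq ▸ Finset.mem_insert_self _ _))
          (by simp)
      · by_cases hbv : b = v
        · rw [hbv]; exact hedge
        · refine Δ.down_closed hτf ?_
          rw [hτeq]
          intro c hc
          rcases Finset.mem_insert.mp hc with rfl | hc
          · exact Finset.mem_insert_self _ _
          · simp only [Finset.mem_singleton] at hc
            subst hc
            exact Finset.mem_insert_of_mem (Finset.mem_erase.mpr ⟨hbv, hbσ⟩)
    · rcases Finset.mem_insert.mp hb with rfl | hbσ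
      · rw [Finset.pair_comm]
        by_cases hav : a = v
        · rw [hav]; exact hedge
        · refine Δ.down_closed hτf ?_
          rw [hτeq]
          intro c hc
          rcases Finset.mem_insert.mp hc with rfl | hc
          · exact Finset.mem_insert_self _ _
          · simp only [Finset.mem_singleton] at hc
            subst hc
            exact Finset.mem_insert_of_mem (Finset.mem_erase.mpr ⟨hav, haσ⟩)
      · exact Δ.down_closed hσ (Finset.insert_subset haσ (by simpa using hbσ))
  have hcard' := hwp.1.1 _ hπ
  rw [Finset.card_insert_of_notMem huσ, hcard] at hcard'
  omega

end SC

/-- A flag normal `(d-1)`-pseudomanifold (`d ≥ 2`) has at least `2d`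
vertices, with equality iff it is the boundary of the `d`-dimensional cross-polytope. -/
theorem statement_10 {V : Type*} [DecidableEq V] (Δ : SC V) (d : ℕ) (hd : 2 ≤ d)
    (hflag : Δ.IsFlag) (hnp : Δ.IsNormalPseudo (d - 1)) :
    2 * d ≤ Δ.vertexSet.card ∧
    (Δ.vertexSet.card = 2 * d ↔ Δ.IsCrossPolytopeBoundary d) := by
  classical
  obtain ⟨hwp, -, -⟩ := hnp
  obtain ⟨σ, hσ, hσc⟩ := hwp.1.2.1
  have hcd : σ.card = d := by omega
  set e := σ.equivFinOfCardEq hcd with he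
  set v : Fin d → V := fun i => (e.symm i : V) with hv
  have hvmem : ∀ i, v i ∈ σ := fun i => (e.symm i).2
  have hvinj : Function.Injective v := fun i j h => by
    have := e.symm.injective (Subtype.ext h)
    exact this
  have hvsurj : ∀ w ∈ σ, ∃ i, v i = w := by
    intro w hw
    exact ⟨e ⟨w, hw⟩, by simp [hv]⟩
  have hmain : ∀ i, ∃ u, u ∉ σ ∧ insert u (σ.erase (v i)) ∈ Δ.faces ∧
      ({u, v i} : Finset V) ∉ Δ.faces :=
    fun i => Δ.ridge_swap (by omega) hflag hwp hσ hcd (hvmem i)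
  choose u h1 h2 h3 using hmain
  have hvface : ∀ i, ({v i} : Finset V) ∈ Δ.faces :=
    fun i => Δ.singleton_mem' hσ (hvmem i)
  have huface : ∀ i, ({u i} : Finset V) ∈ Δ.faces :=
    fun i => Δ.singleton_mem' (h2 i) (Finset.mem_insert_self _ _)
  have huvface : ∀ i j, i ≠ j → ({u i, v j} : Finset V) ∈ Δ.faces := by
    intro i j hij
    refine Δ.down_closed (h2 i) ?_
    intro c hc
    rcases Finset.mem_insert.mp hc with rfl | hc
    · exact Finset.mem_insert_self _ _
    · simp only [Finset.mem_singleton] at hc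
      subst hc
      exact Finset.mem_insert_of_mem
        (Finset.mem_erase.mpr ⟨fun h => hij (hvinj h).symm, hvmem j⟩)
  have huv_ne : ∀ i j, u i ≠ v j := by
    intro i j h
    by_cases hij : i = j
    · subst hij
      apply h3 i
      rw [h]
      simpa using hvface i
    · exact h1 i (h ▸ hvmem j)
  have huinj : Function.Injective u := by
    intro i j h
    by_contra hij
    exact h3 j (h ▸ huvface i j hij)
  set S : Finset V := σ ∪ Finset.image u Finset.univ with hS
  have hdisj : Disjoint σ (Finset.image u Finset.univ) := by
    rw [Finset.disjoint_right]
    intro w hw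
    obtain ⟨i, -, rfl⟩ := Finset.mem_image.mp hw
    exact h1 i
  have hScard : S.card = 2 * d := by
    rw [hS, Finset.card_union_of_disjoint hdisj, hcd,
      Finset.card_image_of_injective _ huinj, Finset.card_univ, Fintype.card_fin]
    omega
  have hSsub : S ⊆ Δ.vertexSet := by
    intro w hw
    rw [Δ.mem_vertexSet_iff']
    rcases Finset.mem_union.mp hw with hw | hw
    · exact ⟨σ, hσ, hw⟩
    · obtain ⟨i, -, rfl⟩ := Finset.mem_image.mp hw
      exact ⟨_, h2 i, Finset.mem_insert_self _ _⟩
  have hlow : 2 * d ≤ Δ.vertexSet.card := hScard ▸ Finset.card_le_card hSsub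
  refine ⟨hlow, ?_, ?_⟩
  · -- equality → cross polytope
    intro hEq
    have hSeq : S = Δ.vertexSet :=
      Finset.eq_of_subset_of_card_le hSsub (by omega)
    -- u i and u j are adjacent for i ≠ j
    have huu : ∀ i j, i ≠ j → ({u i, u j} : Finset V) ∈ Δ.faces := by
      intro i j hij
      set τi : Finset V := insert (u i) (σ.erase (v i)) with hτi
      have hτif : τi ∈ Δ.faces := h2 i
      have hτic : τi.card = d := by
        rw [hτi, Finset.card_insert_of_notMem
          (fun h => h1 i (Finset.mem_of_mem_erase h)),
          Finset.card_erase_of_mem (hvmem i), hcd]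
        omega
      have hvjτ : v j ∈ τi :=
        Finset.mem_insert_of_mem
          (Finset.mem_erase.mpr ⟨fun h => hij (hvinj h).symm, hvmem j⟩)
      obtain ⟨w, hw1, hw2, hw3⟩ := Δ.ridge_swap (by omega) hflag hwp hτif hτic hvjτ
      have hwface : w ∈ Δ.vertexSet := by
        rw [Δ.mem_vertexSet_iff']
        exact ⟨_, hw2, Finset.mem_insert_self _ _⟩
      have hwS : w ∈ S := hSeq ▸ hwface
      have hwuj : w = u j := by
        rcases Finset.mem_union.mp hwS with hwσ | hwim
        · obtain ⟨k, rfl⟩ := hvsurj w hwσ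
          exfalso
          apply hw3
          by_cases hkj : k = j
          · subst hkj; simpa using hvface k
          · exact Δ.down_closed hσ
              (Finset.insert_subset (hvmem k) (by simpa using hvmem j))
        · obtain ⟨k, -, rfl⟩ := Finset.mem_image.mp hwim
          by_cases hkj : k = j
          · rw [hkj]
          · exact absurd (huvface k j hkj) hw3
      refine Δ.down_closed hw2 ?_
      intro c hc
      rcases Finset.mem_insert.mp hc with rfl | hc
      · refine Finset.mem_insert_of_mem (Finset.mem_erase.mpr ⟨huv_ne i j, ?_⟩)
        exact Finset.mem_insert_self _ _
      · simp only [Finset.mem_singleton] at hc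
        subst hc
        rw [hwuj] at *
        exact Finset.mem_insert_self _ _
    refine ⟨v, u, hvinj, huinj, fun i j => (huv_ne j i).symm, ?_⟩
    intro σ'
    constructor
    · intro hσ'
      constructor
      · intro w hw
        have : w ∈ S := hSeq ▸ (Δ.mem_vertexSet_iff' w).mpr ⟨σ', hσ', hw⟩
        rcases Finset.mem_union.mp this with hwσ | hwim
        · obtain ⟨i, rfl⟩ := hvsurj w hwσ
          exact ⟨i, Or.inl rfl⟩
        · obtain ⟨i, -, rfl⟩ := Finset.mem_image.mp hwim
          exact ⟨i, Or.inr rfl⟩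
      · rintro i ⟨hvi, hui⟩
        exact h3 i (Δ.down_closed hσ' (Finset.insert_subset hui (by simpa using hvi)))
    · rintro ⟨hall, hpair⟩
      apply hflag
      intro a ha b hb
      obtain ⟨ia, hia⟩ := hall a ha
      obtain ⟨ib, hib⟩ := hall b hb
      rcases hia with rfl | rfl <;> rcases hib with rfl | rfl
      · exact Δ.down_closed hσ
          (Finset.insert_subset (hvmem ia) (by simpa using hvmem ib))
      · by_cases hij : ia = ib
        · exact absurd ⟨ha, by rw [hij]; exact hb⟩ (hpair ia)
        · rw [Finset.pair_comm]
          exact huvface ib ia fun h => hij h.symm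
      · by_cases hij : ia = ib
        · exact absurd ⟨by rw [hij]; exact hb, ha⟩ (hpair ia)
        · exact huvface ia ib hij
      · by_cases hij : ia = ib
        · subst hij
          have : ({u ia, u ia} : Finset V) = {u ia} := by simp
          rw [this]; exact huface ia
        · exact huu ia ib hij
  · -- cross polytope → equality
    rintro ⟨x, y, hxinj, hyinj, hxy, hiff⟩
    have hxf : ∀ i, ({x i} : Finset V) ∈ Δ.faces := by
      intro i
      refine (hiff {x i}).mpr ⟨?_, ?_⟩
      · intro w hw
        simp only [Finset.mem_singleton] at hw
        exact ⟨i, Or.inl hw⟩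
      · rintro j ⟨-, hj⟩
        simp only [Finset.mem_singleton] at hj
        exact hxy i j hj.symm
    have hyf : ∀ i, ({y i} : Finset V) ∈ Δ.faces := by
      intro i
      refine (hiff {y i}).mpr ⟨?_, ?_⟩
      · intro w hw
        simp only [Finset.mem_singleton] at hw
        exact ⟨i, Or.inr hw⟩
      · rintro j ⟨hj, -⟩
        simp only [Finset.mem_singleton] at hj
        exact hxy j i hj
    have hVeq : Δ.vertexSet = Finset.image x Finset.univ ∪ Finset.image y Finset.univ := by
      apply Finset.Subset.antisymm
      · intro w hw
        obtain ⟨τ, hτ, hwτ⟩ := (Δ.mem_vertexSet_iff' w).mp hw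
        obtain ⟨i, hi⟩ := ((hiff τ).mp hτ).1 w hwτ
        rcases hi with rfl | rfl
        · exact Finset.mem_union_left _ (Finset.mem_image.mpr ⟨i, Finset.mem_univ i, rfl⟩)
        · exact Finset.mem_union_right _ (Finset.mem_image.mpr ⟨i, Finset.mem_univ i, rfl⟩)
      · intro w hw
        rcases Finset.mem_union.mp hw with hw | hw <;>
          obtain ⟨i, -, rfl⟩ := Finset.mem_image.mp hw
        · exact (Δ.mem_vertexSet_iff' _).mpr ⟨_, hxf i, Finset.mem_singleton_self _⟩
        · exact (Δ.mem_vertexSet_iff' _).mpr ⟨_, hyf i, Finset.mem_singleton_self _⟩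
    rw [hVeq, Finset.card_union_of_disjoint, Finset.card_image_of_injective _ hxinj,
      Finset.card_image_of_injective _ hyinj, Finset.card_univ, Fintype.card_fin]
    · omega
    · rw [Finset.disjoint_left]
      intro w hw hw'
      obtain ⟨i, -, rfl⟩ := Finset.mem_image.mp hw
      obtain ⟨j, -, hj⟩ := Finset.mem_image.mp hw'
      exact hxy i j hj.symm
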